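/- Let f : ℂ → SL_n(ℂ) (n ≥ 3) be an algebraic embedding and suppose: (i) t ↦ (f_{ij}(t))_{1≤i≤n, 2≤j≤n} (the last n−1 columns) is an algebraic embedding into M_{n,(n-1)}(ℂ); (ii) the row vector (f_{n2}(t),...,f_{nn}(t)) is nonzero for all t ∈ ℂ. Then there exist polynomials p̃₂,...,p̃ₙ ∈ ℂ[t] with Σ_{k=2}^{n} f_{nk}(t)·p̃ₖ(t) = t − f_{n1}(t), and consequently an algebraic automorphism φ of SL_n(ℂ) (right multiplication by a lower-triangular unipotent matrix with polynomial entries in the last n−1 columns) such that the (n,1)-entry of φ(f(t)) equals t for all t. -/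

import Mathlib

set_option maxHeartbeats 1000000
set_option synthInstance.maxHeartbeats 400000

section AlgebraPart
open Polynomial


lemma constC_mem (A : Subalgebra ℂ (Polynomial ℂ)) (r : ℂ) : C r ∈ A := by
  simpa [Polynomial.algebraMap_eq] using A.algebraMap_mem r

/-- Hermite interpolation within a point/tangent-separating subalgebra. -/
lemma hermiteA (A : Subalgebra ℂ (Polynomial ℂ))
    (hsep : ∀ x y : ℂ, x ≠ y → ∃ a ∈ A, a.eval x ≠ a.eval y)
    (htan : ∀ x : ℂ, ∃ a ∈ A, a.derivative.eval x ≠ 0)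
    (T : Finset ℂ) (m : ℂ → ℕ) (b : Polynomial ℂ) :
    ∃ a ∈ A, ∀ x ∈ T, (X - C x) ^ (m x) ∣ (b - a) := by
  suffices H : ∀ (N : ℕ) (m : ℂ → ℕ), (∑ x ∈ T, m x) = N → ∀ b : Polynomial ℂ,
      ∃ a ∈ A, ∀ x ∈ T, (X - C x) ^ (m x) ∣ (b - a) by
    exact H _ m rfl b
  clear b m
  intro N
  induction N using Nat.strong_induction_on with
  | _ N IH =>
  intro m hm b
  by_cases h0 : ∀ x ∈ T, m x = 0
  · refine ⟨0, A.zero_mem, fun x hx => ?_⟩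
    rw [h0 x hx, pow_zero]
    exact one_dvd _
  push_neg at h0
  obtain ⟨x0, hx0T, hx0⟩ := h0
  have hx0pos : 0 < m x0 := Nat.pos_of_ne_zero hx0
  set m' : ℂ → ℕ := Function.update m x0 (m x0 - 1) with hm'def
  have hsum' : (∑ x ∈ T, m' x) = N - 1 := by
    rw [hm'def, Finset.sum_update_of_mem hx0T, ← hm,
      ← Finset.sum_erase_add T m hx0T, Finset.sdiff_singleton_eq_erase]
    omega
  have hNpos : 0 < N := by
    rw [← hm]
    exact lt_of_lt_of_le hx0pos (Finset.single_le_sum (fun _ _ => Nat.zero_le _) hx0T)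
  obtain ⟨a', ha'A, hdvd'⟩ := IH (N - 1) (by omega) m' hsum' b
  set k := m x0 - 1 with hkdef
  have hk : (X - C x0) ^ k ∣ b - a' := by
    have := hdvd' x0 hx0T
    rwa [hm'def, Function.update_self] at this
  obtain ⟨h, hh⟩ := hk
  -- tangent element at x0
  obtain ⟨v, hvA, hv⟩ := htan x0
  set z : Polynomial ℂ := v - C (v.eval x0) with hzdef
  have hzA : z ∈ A := A.sub_mem hvA (constC_mem A _)
  have hzx : z.eval x0 = 0 := by simp [hzdef]
  obtain ⟨zh, hzfac⟩ : (X - C x0) ∣ z := dvd_iff_isRoot.mpr hzx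
  have hzh : zh.eval x0 ≠ 0 := by
    have hder : z.derivative = zh + (X - C x0) * zh.derivative := by
      rw [hzfac, derivative_mul, derivative_X_sub_C, one_mul]
    have : z.derivative.eval x0 = zh.eval x0 := by simp [hder]
    have hzv : z.derivative = v.derivative := by simp [hzdef]
    rw [hzv] at this
    rw [← this]
    exact hv
  -- separation elements
  have husep : ∀ y : (T.erase x0 : Finset ℂ), ∃ u : Polynomial ℂ,
      u ∈ A ∧ u.eval (y : ℂ) = 0 ∧ u.eval x0 ≠ 0 := by
    rintro ⟨y, hy⟩
    have hne : x0 ≠ y := (Finset.ne_of_mem_erase hy).symm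
    obtain ⟨a, haA, ha⟩ := hsep x0 y hne
    exact ⟨a - C (a.eval y), A.sub_mem haA (constC_mem A _), by simp, by
      simpa [sub_ne_zero] using ha⟩
  choose u huA hu0 hux using husep
  set W : Polynomial ℂ := ∏ y : (T.erase x0 : Finset ℂ), (u y) ^ (m (y : ℂ)) with hWdef
  have hWA : W ∈ A := Subalgebra.prod_mem A fun y _ => Subalgebra.pow_mem A (huA y) _
  have hWx : W.eval x0 ≠ 0 := by
    rw [hWdef, eval_prod]
    refine Finset.prod_ne_zero_iff.mpr fun y _ => ?_
    rw [eval_pow]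
    exact pow_ne_zero _ (hux y)
  have hWy : ∀ y ∈ T.erase x0, (X - C y) ^ (m y) ∣ W := by
    intro y hy
    have : (X - C y) ^ (m y) ∣ (u ⟨y, hy⟩) ^ (m y) :=
      pow_dvd_pow_of_dvd (dvd_iff_isRoot.mpr (hu0 ⟨y, hy⟩)) _
    exact this.trans (Finset.dvd_prod_of_mem (fun y : (T.erase x0 : Finset ℂ) => (u y) ^ (m (y : ℂ))) (Finset.mem_univ (⟨y, hy⟩ : (T.erase x0 : Finset ℂ))))
  set cc : ℂ := zh.eval x0 ^ k * W.eval x0 with hccdef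
  have hcc : cc ≠ 0 := mul_ne_zero (pow_ne_zero _ hzh) hWx
  set lam : ℂ := h.eval x0 / cc with hlamdef
  refine ⟨a' + C lam * (z ^ k * W), A.add_mem ha'A
    (A.mul_mem (constC_mem A _) (A.mul_mem (Subalgebra.pow_mem A hzA _) hWA)), ?_⟩
  intro x hxT
  have hsplit : b - (a' + C lam * (z ^ k * W)) = (b - a') - C lam * (z ^ k * W) := by ring
  rw [hsplit]
  by_cases hxx0 : x = x0
  · subst hxx0
    have hzk : z ^ k = (X - C x) ^ k * zh ^ k := by rw [hzfac, mul_pow]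
    have hfact : (b - a') - C lam * (z ^ k * W)
        = (X - C x) ^ k * (h - C lam * (zh ^ k * W)) := by
      rw [hh, hzk]; ring
    have hroot : (h - C lam * (zh ^ k * W)).eval x = 0 := by
      simp only [eval_sub, eval_mul, eval_C, eval_pow]
      rw [hlamdef, hccdef]
      field_simp
      ring
    obtain ⟨w, hw⟩ := dvd_iff_isRoot.mpr hroot
    rw [hfact, hw]
    have hmx : m x = k + 1 := by omega
    rw [hmx, pow_succ]
    ring_nf
    exact ⟨w, by ring⟩
  · have h1 : (X - C x) ^ (m x) ∣ b - a' := by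
      have := hdvd' x hxT
      rwa [hm'def, Function.update_of_ne hxx0] at this
    have h2 : (X - C x) ^ (m x) ∣ C lam * (z ^ k * W) := by
      have := (hWy x (Finset.mem_erase.mpr ⟨hxx0, hxT⟩)).mul_left (C lam * z ^ k)
      rwa [mul_assoc] at this
    exact dvd_sub h1 h2

lemma pairwise_coprime_linear (T : Finset ℂ) (m : ℂ → ℕ) :
    (T : Set ℂ).Pairwise (Function.onFun IsCoprime fun x => (X - C x) ^ (m x)) := by
  intro x _ y _ hxy
  exact (isCoprime_X_sub_C_of_isUnit_sub ((sub_ne_zero.mpr hxy).isUnit)).pow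

/-- If each `(X - C x)^(rootMultiplicity x g)` for `x ∈ g.roots` divides `b`,
then `g ∣ b`. -/
lemma dvd_of_roots_dvd {g b : Polynomial ℂ} (hg : g ≠ 0)
    (h : ∀ x ∈ g.roots.toFinset, (X - C x) ^ (g.rootMultiplicity x) ∣ b) : g ∣ b := by
  have hsplit : g = C g.leadingCoeff * (g.roots.map fun a => X - C a).prod :=
    (IsAlgClosed.splits g).eq_prod_roots
  have hprodeq : (g.roots.map fun a => X - C a).prod
      = ∏ x ∈ g.roots.toFinset, (X - C x) ^ (g.rootMultiplicity x) := by
    rw [Finset.prod_multiset_map_count]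
    exact Finset.prod_congr rfl fun x _ => by rw [count_roots]
  have hdvd : (∏ x ∈ g.roots.toFinset, (X - C x) ^ (g.rootMultiplicity x)) ∣ b :=
    Finset.prod_dvd_of_coprime (pairwise_coprime_linear _ _) fun x hx => h x hx
  obtain ⟨w, hw⟩ := hdvd
  refine ⟨C (g.leadingCoeff)⁻¹ * w, ?_⟩
  have hlc : C g.leadingCoeff * C (g.leadingCoeff)⁻¹ = 1 := by
    rw [← C_mul, mul_inv_cancel₀ (leadingCoeff_ne_zero.mpr hg), C_1]
  calc b = (Multiset.map (fun a => X - C a) g.roots).prod * w := by rw [hprodeq, hw]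
    _ = (C g.leadingCoeff * (Multiset.map (fun a => X - C a) g.roots).prod)
        * (C (g.leadingCoeff)⁻¹ * w) := by
        rw [mul_mul_mul_comm, hlc, one_mul]
    _ = g * (C (g.leadingCoeff)⁻¹ * w) := by rw [← hsplit]

lemma conductorA (A : Subalgebra ℂ (Polynomial ℂ))
    (hsep : ∀ x y : ℂ, x ≠ y → ∃ a ∈ A, a.eval x ≠ a.eval y)
    (htan : ∀ x : ℂ, ∃ a ∈ A, a.derivative.eval x ≠ 0) :
    ∃ g : Polynomial ℂ, g ≠ 0 ∧ ∀ b : Polynomial ℂ, g * b ∈ A := by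
  -- a monic nonconstant element of A
  obtain ⟨v, hvA, hv⟩ := htan 0
  have hvd : v.derivative ≠ 0 := fun h => hv (by simp [h])
  have hvdeg : v.natDegree ≠ 0 := by
    intro h
    exact hvd (by rw [Polynomial.eq_C_of_natDegree_eq_zero h]; simp)
  have hvne : v ≠ 0 := fun h => hvd (by simp [h])
  set q : Polynomial ℂ := C (v.leadingCoeff)⁻¹ * v with hqdef
  have hqA : q ∈ A := A.mul_mem (constC_mem A _) hvA
  have hlc : v.leadingCoeff ≠ 0 := leadingCoeff_ne_zero.mpr hvne
  have hq : q.Monic := monic_C_mul_of_mul_leadingCoeff_eq_one (by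
    rw [inv_mul_cancel₀ hlc])
  have hqdeg : q.natDegree = v.natDegree := by
    rw [hqdef, natDegree_C_mul (inv_ne_zero hlc)]
  have hqd : q.natDegree ≠ 0 := by rw [hqdeg]; exact hvdeg
  -- pick a noncritical value c
  have hq' : q.derivative ≠ 0 := by
    intro h
    have := natDegree_eq_zero_of_derivative_eq_zero h
    exact hqd this
  set V : Finset ℂ := (q.derivative.roots.toFinset).image (fun r => q.eval r) with hVdef
  obtain ⟨c, hc⟩ := Infinite.exists_notMem_finset V
  set p : Polynomial ℂ := q - C c with hpdef
  have hpA : p ∈ A := A.sub_mem hqA (constC_mem A _)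
  have hpm : p.Monic := by
    have : p.natDegree = q.natDegree := natDegree_sub_C
    unfold Polynomial.Monic Polynomial.leadingCoeff
    rw [this, hpdef, coeff_sub, coeff_C, if_neg hqd, sub_zero]
    exact hq
  have hpne : p ≠ 0 := hpm.ne_zero
  have hpd' : p.derivative = q.derivative := by rw [hpdef]; simp
  -- roots of p are simple
  have hnodup : p.roots.Nodup := by
    rw [Multiset.nodup_iff_count_le_one]
    intro x
    by_contra hcount
    push_neg at hcount
    rw [count_roots] at hcount
    have h2 : (X - C x) ^ 2 ∣ p :=
      dvd_trans (pow_dvd_pow _ hcount) (pow_rootMultiplicity_dvd p x)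
    obtain ⟨w, hw⟩ := h2
    have hroot : p.eval x = 0 := by rw [hw]; simp
    have hder : p.derivative.eval x = 0 := by
      rw [hw, derivative_mul, derivative_pow, derivative_X_sub_C]
      simp
    have hx' : x ∈ q.derivative.roots := by
      rw [mem_roots hq']
      rw [hpd'] at hder
      exact hder
    have : q.eval x ∈ V := by
      rw [hVdef]
      exact Finset.mem_image.mpr ⟨x, Multiset.mem_toFinset.mpr hx', rfl⟩
    have hqx : q.eval x = c := by
      have := hroot
      rw [hpdef] at this
      simp only [eval_sub, eval_C] at this
      linear_combination this
    rw [hqx] at this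
    exact hc this
  -- interpolation: B = A + pB
  have key : ∀ b : Polynomial ℂ, ∃ a ∈ A, p ∣ (b - a) := by
    intro b
    obtain ⟨a, haA, hdvd⟩ := hermiteA A hsep htan p.roots.toFinset
      (fun x => p.rootMultiplicity x) b
    refine ⟨a, haA, dvd_of_roots_dvd hpne hdvd⟩
  -- X is integral over A, so ℂ[X] is a finite A-module
  have hint : IsIntegral A (X : Polynomial ℂ) := by
    refine ⟨(p.map (algebraMap ℂ A)) - Polynomial.C (⟨p, hpA⟩ : A), ?_, ?_⟩
    · apply Polynomial.Monic.sub_of_left (hpm.map _)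
      rw [hpm.degree_map]
      calc (Polynomial.C (⟨p, hpA⟩ : A)).degree ≤ 0 := degree_C_le
        _ < p.degree := by
          rw [degree_eq_natDegree hpne]
          exact_mod_cast Nat.pos_of_ne_zero (by rw [natDegree_sub_C]; exact hqd)
    · have h1 : Polynomial.aeval (X : Polynomial ℂ) (p.map (algebraMap ℂ A)) = p := by
        rw [Polynomial.aeval_def, Polynomial.eval₂_map, ← IsScalarTower.algebraMap_eq,
          ← Polynomial.aeval_def, Polynomial.aeval_X_left_apply]
      show Polynomial.eval₂ (algebraMap A (Polynomial ℂ)) X _ = 0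
      rw [Polynomial.eval₂_sub, Polynomial.eval₂_C, Polynomial.eval₂_map,
        ← IsScalarTower.algebraMap_eq, ← Polynomial.aeval_def, Polynomial.aeval_X_left_apply]
      exact sub_eq_zero.mpr rfl
  have hadj : Algebra.adjoin A {(X : Polynomial ℂ)} = ⊤ := by
    rw [eq_top_iff]
    rintro (b : Polynomial ℂ) -
    induction b using Polynomial.induction_on' with
    | add f g hf hg => exact add_mem hf hg
    | monomial k r =>
      rw [← Polynomial.C_mul_X_pow_eq_monomial]
      have hX : (X : Polynomial ℂ) ∈ Algebra.adjoin A {(X : Polynomial ℂ)} :=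
        Algebra.subset_adjoin rfl
      have h1 : (X : Polynomial ℂ) ^ k ∈ Algebra.adjoin A {(X : Polynomial ℂ)} := pow_mem hX k
      have h2 : (Polynomial.C r : Polynomial ℂ) ∈ Algebra.adjoin A {(X : Polynomial ℂ)} := by
        have h3 : (Polynomial.C r : Polynomial ℂ) = algebraMap A (Polynomial ℂ)
          ⟨Polynomial.C r, constC_mem A r⟩ := rfl
        rw [h3]
        exact Subalgebra.algebraMap_mem _ _
      exact mul_mem h2 h1
  have hfin : Module.Finite A (Polynomial ℂ) := by
    constructor
    have := hint.fg_adjoin_singleton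
    rwa [hadj, Algebra.top_toSubmodule] at this
  -- Nakayama
  set Asub : Submodule A (Polynomial ℂ) := Submodule.span A {1} with hAsubdef
  have hAsubmem : ∀ b : Polynomial ℂ, b ∈ Asub ↔ b ∈ A := by
    intro b
    rw [hAsubdef, Submodule.mem_span_singleton]
    constructor
    · rintro ⟨r, rfl⟩
      have : r • (1 : Polynomial ℂ) = (r : Polynomial ℂ) := by
        rw [Algebra.smul_def, mul_one]; rfl
      rw [this]; exact r.2
    · intro hb
      exact ⟨⟨b, hb⟩, by rw [Algebra.smul_def, mul_one]; rfl⟩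
  set I : Ideal A := Ideal.span {(⟨p, hpA⟩ : A)} with hIdef
  have hfinQ : Module.Finite A (Polynomial ℂ ⧸ Asub) := Module.Finite.quotient A Asub
  have hle : (⊤ : Submodule A (Polynomial ℂ ⧸ Asub)) ≤ I • ⊤ := by
    intro z _
    obtain ⟨b, rfl⟩ := Submodule.Quotient.mk_surjective Asub z
    obtain ⟨a, haA, hdvd⟩ := key b
    obtain ⟨b', hb'⟩ := hdvd
    have hbeq : b = (⟨p, hpA⟩ : A) • b' + a := by
      rw [Algebra.smul_def]
      show b = p * b' + a
      rw [← hb']; ring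
    rw [hbeq, Submodule.Quotient.mk_add]
    have ha0 : Submodule.Quotient.mk (p := Asub) a = 0 := by
      rw [Submodule.Quotient.mk_eq_zero]
      exact (hAsubmem a).mpr haA
    rw [ha0, add_zero, Submodule.Quotient.mk_smul]
    exact Submodule.smul_mem_smul (Ideal.subset_span rfl) trivial
  obtain ⟨r, hr1, hr0⟩ :=
    Submodule.exists_sub_one_mem_and_smul_eq_zero_of_fg_of_le_smul I ⊤
      (Module.finite_def.mp hfinQ) hle
  refine ⟨(r : Polynomial ℂ), ?_, ?_⟩
  · intro hr
    rw [hIdef, Ideal.mem_span_singleton] at hr1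
    obtain ⟨s, hs⟩ := hr1
    have hs' : (r : Polynomial ℂ) - 1 = p * (s : Polynomial ℂ) := by
      have := congrArg (Subtype.val) hs
      simpa using this
    rw [hr] at hs'
    have : p ∣ 1 := ⟨-(s : Polynomial ℂ), by linear_combination -hs'⟩
    have := natDegree_eq_zero_of_isUnit (isUnit_of_dvd_one this)
    rw [natDegree_sub_C] at this
    exact hqd this
  · intro b
    have := hr0 (Submodule.Quotient.mk (p := Asub) b) trivial
    rw [← Submodule.Quotient.mk_smul Asub r b, Submodule.Quotient.mk_eq_zero] at this
    rw [hAsubmem] at this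
    have heq : r • b = (r : Polynomial ℂ) * b := by rw [Algebra.smul_def]; rfl
    rwa [heq] at this

lemma subalgebraEqTop (A : Subalgebra ℂ (Polynomial ℂ))
    (hsep : ∀ x y : ℂ, x ≠ y → ∃ a ∈ A, a.eval x ≠ a.eval y)
    (htan : ∀ x : ℂ, ∃ a ∈ A, a.derivative.eval x ≠ 0) : A = ⊤ := by
  obtain ⟨g, hg0, hgB⟩ := conductorA A hsep htan
  rw [eq_top_iff]
  intro b _
  obtain ⟨a, haA, hdvd⟩ := hermiteA A hsep htan g.roots.toFinset
    (fun x => g.rootMultiplicity x) b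
  obtain ⟨w, hw⟩ := dvd_of_roots_dvd hg0 hdvd
  have hb : b = g * w + a := by rw [← hw]; ring
  rw [hb]
  exact A.add_mem (hgB w) haA

end AlgebraPart


noncomputable section MatAux
variable {n : ℕ}

/-- The strictly lower unipotent correction matrix: entries `g k` in column 0, rows `k+1`. -/
def corrMat (n : ℕ) (hn : 0 < n) (g : Fin (n - 1) → ℂ) : Matrix (Fin n) (Fin n) ℂ :=
  ∑ k : Fin (n - 1), Matrix.single
    (⟨(k : ℕ) + 1, by have := k.isLt; omega⟩ : Fin n) (⟨0, hn⟩ : Fin n) (g k)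

lemma corrMat_col (hn : 0 < n) {g : Fin (n - 1) → ℂ} {j : Fin n} (hj : j ≠ ⟨0, hn⟩) (i : Fin n) :
    corrMat n hn g i j = 0 := by
  rw [corrMat, Matrix.sum_apply]
  exact Finset.sum_eq_zero fun k _ =>
    Matrix.single_apply_of_col_ne _ _ (fun h => hj h.symm) _
lemma corrMat_diag (hn : 0 < n) {g : Fin (n - 1) → ℂ} (i : Fin n) : corrMat n hn g i i = 0 := by
  rw [corrMat, Matrix.sum_apply]
  refine Finset.sum_eq_zero fun k _ => ?_
  by_cases h : i = (⟨0, hn⟩ : Fin n)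
  · refine Matrix.single_apply_of_row_ne ?_ _ _ _
    intro hrow
    rw [← hrow] at h
    exact absurd (congrArg Fin.val h) (by simp)
  · exact Matrix.single_apply_of_col_ne _ _ (fun hc => h hc.symm) _

lemma corrMat_mul_corrMat (hn : 0 < n) (g g' : Fin (n - 1) → ℂ) :
    corrMat n hn g * corrMat n hn g' = 0 := by
  rw [corrMat, corrMat, Matrix.sum_mul]
  refine Finset.sum_eq_zero fun k _ => ?_
  rw [Matrix.mul_sum]
  refine Finset.sum_eq_zero fun l _ => ?_
  apply Matrix.single_mul_single_of_ne
  intro h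
  exact absurd (congrArg Fin.val h) (by simp)

/-- determinant of `1 + N` where `N` is supported in column 0 with zero diagonal. -/
lemma det_one_add_corr (hn : 0 < n) (N : Matrix (Fin n) (Fin n) ℂ)
    (hcol : ∀ (j : Fin n), j ≠ ⟨0, hn⟩ → ∀ i, N i j = 0)
    (hdiag : ∀ i, N i i = 0) : (1 + N).det = 1 := by
  have htri : (1 + N).BlockTriangular OrderDual.toDual := by
    intro i j hij
    have hij' : i < j := hij
    rw [Matrix.add_apply, Matrix.one_apply_ne (ne_of_lt hij'), zero_add]
    refine hcol j (fun h => ?_) i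
    · have : (j : ℕ) = 0 := congrArg Fin.val h
      have : (i : ℕ) < (j : ℕ) := hij'
      omega
  rw [Matrix.det_of_lowerTriangular _ htri]
  refine Finset.prod_eq_one fun i _ => ?_
  rw [Matrix.add_apply, Matrix.one_apply_eq, hdiag i, add_zero]

lemma mul_one_add_corr_col (hn : 0 < n) (Y N : Matrix (Fin n) (Fin n) ℂ)
    (hcol : ∀ (j : Fin n), j ≠ ⟨0, hn⟩ → ∀ i, N i j = 0)
    {j : Fin n} (hj : j ≠ ⟨0, hn⟩) (i : Fin n) :
    (Y * (1 + N)) i j = Y i j := by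
  rw [mul_add, mul_one, Matrix.add_apply, Matrix.mul_apply]
  rw [Finset.sum_eq_zero fun c _ => by rw [hcol j hj c, mul_zero], add_zero]

lemma mul_one_add_corrMat_zero (hn : 0 < n) {i : Fin n} (Y : Matrix (Fin n) (Fin n) ℂ) (g : Fin (n - 1) → ℂ) :
    (Y * (1 + corrMat n hn g)) i (⟨0, hn⟩ : Fin n)
      = Y i ⟨0, hn⟩ + ∑ k : Fin (n - 1), Y i ⟨(k : ℕ) + 1, by have := k.isLt; omega⟩ * g k := by
  rw [mul_add, mul_one, Matrix.add_apply]
  congr 1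
  rw [corrMat, Matrix.mul_sum]
  rw [Matrix.sum_apply]
  exact Finset.sum_congr rfl fun k _ => Matrix.mul_single_apply_same _ _ _ _ _



def embCol (n : ℕ) : Fin n × Fin (n - 1) → Fin n × Fin n :=
  fun s => (s.1, ⟨(s.2 : ℕ) + 1, by have := s.2.isLt; omega⟩)

lemma corrMat_add_neg {n : ℕ} (hn : 0 < n) (g : Fin (n - 1) → ℂ) :
    corrMat n hn g + corrMat n hn (fun k => - g k) = 0 := by
  rw [corrMat, corrMat, ← Finset.sum_add_distrib]
  refine Finset.sum_eq_zero fun k _ => ?_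
  ext a b
  by_cases h : (⟨(k : ℕ) + 1, by have := k.isLt; omega⟩ : Fin n) = a ∧ (⟨0, hn⟩ : Fin n) = b
  · obtain ⟨rfl, rfl⟩ := h
    simp
  · rw [Matrix.add_apply, Matrix.single_apply_of_ne (h := h),
      Matrix.single_apply_of_ne (h := h), add_zero, Matrix.zero_apply]


end MatAux


open Matrix

noncomputable section

abbrev SL (n : ℕ) := Matrix.SpecialLinearGroup (Fin n) ℂ

/-- A self-map of `SL n ℂ` is regular (algebraic) if each matrix entry of the image is
given by a polynomial in the matrix entries of the argument. -/
def SLRegular {n : ℕ} (φ : SL n → SL n) : Prop :=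
  ∀ i j : Fin n, ∃ P : MvPolynomial (Fin n × Fin n) ℂ,
    ∀ X : SL n, (φ X : Matrix (Fin n) (Fin n) ℂ) i j =
      MvPolynomial.eval (fun kl => (X : Matrix (Fin n) (Fin n) ℂ) kl.1 kl.2) P

/-- An algebraic automorphism of `SL n ℂ`: a regular map with a regular inverse. -/
def SLAlgAut {n : ℕ} (φ : SL n → SL n) : Prop :=
  SLRegular φ ∧ ∃ ψ : SL n → SL n, SLRegular ψ ∧
    Function.LeftInverse ψ φ ∧ Function.RightInverse ψ φ

theorem stmt_18 (n : ℕ) (hn : 3 ≤ n) (f : ℂ → SL n)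
    (P : Fin n → Fin n → Polynomial ℂ)
    (hP : ∀ (t : ℂ) (i j : Fin n), (f t : Matrix (Fin n) (Fin n) ℂ) i j = (P i j).eval t)
    -- `f` is an algebraic embedding
    (hinj : Function.Injective f)
    (hproper : IsProperMap (fun t : ℂ => (f t : Matrix (Fin n) (Fin n) ℂ)))
    (himm : ∀ t : ℂ, Matrix.of (fun i j : Fin n => (P i j).derivative.eval t) ≠ 0)
    -- (i) the projection of `f` onto the last `n-1` columns is an algebraic embedding
    (hinj' : Function.Injective (fun t : ℂ =>
      Matrix.of (fun (i : Fin n) (j : Fin (n - 1)) =>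
        (f t : Matrix (Fin n) (Fin n) ℂ) i ⟨(j : ℕ) + 1, by omega⟩)))
    (hproper' : IsProperMap (fun t : ℂ =>
      Matrix.of (fun (i : Fin n) (j : Fin (n - 1)) =>
        (f t : Matrix (Fin n) (Fin n) ℂ) i ⟨(j : ℕ) + 1, by omega⟩)))
    (himm' : ∀ t : ℂ, Matrix.of (fun (i : Fin n) (j : Fin (n - 1)) =>
      (P i ⟨(j : ℕ) + 1, by omega⟩).derivative.eval t) ≠ 0)
    -- (ii) the last row, without its first entry, is nowhere zero
    (hrow : ∀ t : ℂ, ∃ j : Fin (n - 1),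
      (f t : Matrix (Fin n) (Fin n) ℂ) ⟨n - 1, by omega⟩ ⟨(j : ℕ) + 1, by omega⟩ ≠ 0) :
    -- the Bézout-type identity
    (∃ p : Fin (n - 1) → Polynomial ℂ, ∀ t : ℂ,
      (∑ j : Fin (n - 1),
        (f t : Matrix (Fin n) (Fin n) ℂ) ⟨n - 1, by omega⟩ ⟨(j : ℕ) + 1, by omega⟩ *
          (p j).eval t) =
        t - (f t : Matrix (Fin n) (Fin n) ℂ) ⟨n - 1, by omega⟩ ⟨0, by omega⟩) ∧
    -- the resulting algebraic automorphism making the `(n,1)`-entry equal to `t`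
    ∃ φ : SL n → SL n, SLAlgAut φ ∧
      ∀ t : ℂ, (φ (f t) : Matrix (Fin n) (Fin n) ℂ) ⟨n - 1, by omega⟩ ⟨0, by omega⟩ = t := by
  have hn0 : 0 < n := by omega
  set Q : Fin (n - 1) → Polynomial ℂ :=
    fun j => P ⟨n - 1, by omega⟩ ⟨(j : ℕ) + 1, by have := j.isLt; omega⟩ with hQdef
  -- Part 1 : Bézout identity
  have hQroot : ∀ t : ℂ, ∃ j : Fin (n - 1), (Q j).eval t ≠ 0 := by
    intro t
    obtain ⟨j, hj⟩ := hrow t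
    refine ⟨j, ?_⟩
    rw [hQdef]
    rw [hP t] at hj
    exact hj
  have hItop : Ideal.span (Set.range Q) = ⊤ := by
    by_contra hne
    obtain ⟨h, hI⟩ := (IsPrincipalIdealRing.principal (Ideal.span (Set.range Q))).principal
    have hdvd : ∀ j, h ∣ Q j := by
      intro j
      have hmem : Q j ∈ Ideal.span (Set.range Q) := Ideal.subset_span ⟨j, rfl⟩
      rw [hI] at hmem
      exact Ideal.mem_span_singleton.mp hmem
    have hnu : ¬ IsUnit h := by
      intro hu
      exact hne (by rw [hI]; exact Ideal.span_singleton_eq_top.mpr hu)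
    obtain ⟨r, hr⟩ : ∃ r : ℂ, h.eval r = 0 := by
      rcases eq_or_ne h 0 with h0 | h0
      · exact ⟨0, by simp [h0]⟩
      · exact Complex.exists_root (Polynomial.degree_pos_of_ne_zero_of_nonunit h0 hnu)
    obtain ⟨j, hj⟩ := hQroot r
    exact hj (Polynomial.eval_eq_zero_of_dvd_of_eval_eq_zero (hdvd j) hr)
  obtain ⟨p, hpsum⟩ : ∃ p : Fin (n - 1) → Polynomial ℂ,
      (∑ j, p j • Q j) = Polynomial.X - P ⟨n - 1, by omega⟩ ⟨0, by omega⟩ := by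
    have : (Polynomial.X - P ⟨n - 1, by omega⟩ ⟨0, by omega⟩) ∈ Ideal.span (Set.range Q) := by
      rw [hItop]; trivial
    exact (Submodule.mem_span_range_iff_exists_fun _).mp this
  have bezout : ∀ t : ℂ,
      (∑ j : Fin (n - 1),
        (f t : Matrix (Fin n) (Fin n) ℂ) ⟨n - 1, by omega⟩ ⟨(j : ℕ) + 1, by omega⟩ *
          (p j).eval t) =
        t - (f t : Matrix (Fin n) (Fin n) ℂ) ⟨n - 1, by omega⟩ ⟨0, by omega⟩ := by
    intro t
    have h1 := congrArg (Polynomial.eval t) hpsum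
    rw [Polynomial.eval_finset_sum] at h1
    simp only [smul_eq_mul, Polynomial.eval_mul, Polynomial.eval_sub, Polynomial.eval_X] at h1
    calc (∑ j : Fin (n - 1),
        (f t : Matrix (Fin n) (Fin n) ℂ) ⟨n - 1, by omega⟩ ⟨(j : ℕ) + 1, by omega⟩ *
          (p j).eval t)
        = ∑ j : Fin (n - 1), (p j).eval t * (Q j).eval t := by
          refine Finset.sum_congr rfl fun j _ => ?_
          rw [hP t, mul_comm]
      _ = t - (P ⟨n - 1, by omega⟩ ⟨0, by omega⟩).eval t := h1
      _ = t - (f t : Matrix (Fin n) (Fin n) ℂ) ⟨n - 1, by omega⟩ ⟨0, by omega⟩ := by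
          rw [hP t]
  refine ⟨⟨p, bezout⟩, ?_⟩
  classical
  -- Part 2 : the automorphism
  set Pfun : Fin n × Fin (n - 1) → Polynomial ℂ :=
    fun s => P s.1 ⟨(s.2 : ℕ) + 1, by have := s.2.isLt; omega⟩ with hPfun
  set A : Subalgebra ℂ (Polynomial ℂ) := Algebra.adjoin ℂ (Set.range Pfun) with hAdef
  have hsepA : ∀ x y : ℂ, x ≠ y → ∃ a ∈ A, a.eval x ≠ a.eval y := by
    intro x y hxy
    by_contra hcon
    push_neg at hcon
    apply hxy
    apply hinj'
    ext i j
    simp only [Matrix.of_apply]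
    rw [hP x, hP y]
    exact hcon (Pfun (i, j)) (Algebra.subset_adjoin (Set.mem_range_self _))
  have htanA : ∀ x : ℂ, ∃ a ∈ A, a.derivative.eval x ≠ 0 := by
    intro x
    by_contra hcon
    push_neg at hcon
    apply himm' x
    ext i j
    simp only [Matrix.of_apply, Matrix.zero_apply]
    exact hcon (Pfun (i, j)) (Algebra.subset_adjoin (Set.mem_range_self _))
  have hAtop := subalgebraEqTop A hsepA htanA
  have hrange : ∀ k : Fin (n - 1), ∃ G : MvPolynomial (Fin n × Fin (n - 1)) ℂ,
      MvPolynomial.aeval Pfun G = p k := by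
    intro k
    have hmem : p k ∈ A := by rw [hAtop]; trivial
    rw [hAdef, Algebra.adjoin_range_eq_range_aeval] at hmem
    obtain ⟨G, hG⟩ := hmem
    exact ⟨G, hG⟩
  choose G hG using hrange
  set γ : Matrix (Fin n) (Fin n) ℂ → Fin (n - 1) → ℂ :=
    fun M k => MvPolynomial.eval (fun s : Fin n × Fin (n - 1) =>
      M (embCol n s).1 (embCol n s).2) (G k) with hγdef
  have hγf : ∀ (t : ℂ) (k : Fin (n - 1)), γ (f t) k = (p k).eval t := by
    intro t k
    have h2 : Polynomial.eval t (MvPolynomial.aeval Pfun (G k))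
        = MvPolynomial.eval (fun s => (Pfun s).eval t) (G k) := by
      rw [MvPolynomial.aeval_def, ← Polynomial.coe_evalRingHom,
        MvPolynomial.eval₂_comp_left (Polynomial.evalRingHom t)
          (algebraMap ℂ (Polynomial ℂ)) Pfun]
      have h3 : (Polynomial.evalRingHom t).comp (algebraMap ℂ (Polynomial ℂ))
          = RingHom.id ℂ := by
        ext a
        simp
      rw [h3]
      rfl
    have h1 : (fun s : Fin n × Fin (n - 1) =>
        (f t : Matrix (Fin n) (Fin n) ℂ) (embCol n s).1 (embCol n s).2)
        = fun s => (Pfun s).eval t := by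
      funext s
      rw [hP t]
      rfl
    rw [hγdef]
    simp only [h1]
    rw [← hG k]
    exact h2.symm
  -- the correction matrices
  set Nm : Matrix (Fin n) (Fin n) ℂ → Matrix (Fin n) (Fin n) ℂ :=
    fun M => corrMat n hn0 (γ M) with hNmdef
  set Nm' : Matrix (Fin n) (Fin n) ℂ → Matrix (Fin n) (Fin n) ℂ :=
    fun M => corrMat n hn0 (fun k => - γ M k) with hNm'def
  have hdet1 : ∀ M, (1 + Nm M).det = 1 :=
    fun M => det_one_add_corr hn0 _ (fun j hj i => corrMat_col hn0 hj i)
      (fun i => corrMat_diag hn0 i)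
  have hdet2 : ∀ M, (1 + Nm' M).det = 1 :=
    fun M => det_one_add_corr hn0 _ (fun j hj i => corrMat_col hn0 hj i)
      (fun i => corrMat_diag hn0 i)
  set φf : SL n → SL n := fun Xm =>
    ⟨(Xm : Matrix (Fin n) (Fin n) ℂ) * (1 + Nm (Xm : Matrix (Fin n) (Fin n) ℂ)), by
      rw [Matrix.det_mul, hdet1, mul_one, Xm.prop]⟩ with hφfdef
  set ψf : SL n → SL n := fun Xm =>
    ⟨(Xm : Matrix (Fin n) (Fin n) ℂ) * (1 + Nm' (Xm : Matrix (Fin n) (Fin n) ℂ)), by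
      rw [Matrix.det_mul, hdet2, mul_one, Xm.prop]⟩ with hψfdef
  have hγcol : ∀ (M M' : Matrix (Fin n) (Fin n) ℂ),
      (∀ i (j : Fin n), j ≠ ⟨0, hn0⟩ → M i j = M' i j) → γ M = γ M' := by
    intro M M' hMM
    funext k
    have harg : (fun s : Fin n × Fin (n - 1) => M (embCol n s).1 (embCol n s).2)
        = (fun s : Fin n × Fin (n - 1) => M' (embCol n s).1 (embCol n s).2) := by
      funext s
      refine hMM (embCol n s).1 (embCol n s).2 (fun hc => ?_)
      have := congrArg Fin.val hc
      simp [embCol] at this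
    rw [hγdef]
    simp only [harg]
  have hφcol : ∀ (Xm : SL n) i (j : Fin n), j ≠ ⟨0, hn0⟩ →
      (φf Xm : Matrix (Fin n) (Fin n) ℂ) i j = (Xm : Matrix (Fin n) (Fin n) ℂ) i j := by
    intro Xm i j hj
    exact mul_one_add_corr_col hn0 _ _ (fun j' hj' i' => corrMat_col hn0 hj' i') hj i
  have hψcol : ∀ (Xm : SL n) i (j : Fin n), j ≠ ⟨0, hn0⟩ →
      (ψf Xm : Matrix (Fin n) (Fin n) ℂ) i j = (Xm : Matrix (Fin n) (Fin n) ℂ) i j := by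
    intro Xm i j hj
    exact mul_one_add_corr_col hn0 _ _ (fun j' hj' i' => corrMat_col hn0 hj' i') hj i
  have hγφ : ∀ Xm : SL n, γ ((φf Xm : Matrix (Fin n) (Fin n) ℂ)) = γ (Xm : Matrix (Fin n) (Fin n) ℂ) :=
    fun Xm => hγcol _ _ (fun i j hj => hφcol Xm i j hj)
  have hγψ : ∀ Xm : SL n, γ ((ψf Xm : Matrix (Fin n) (Fin n) ℂ)) = γ (Xm : Matrix (Fin n) (Fin n) ℂ) :=
    fun Xm => hγcol _ _ (fun i j hj => hψcol Xm i j hj)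
  have hprod : ∀ M : Matrix (Fin n) (Fin n) ℂ, (1 + Nm M) * (1 + Nm' M) = 1 := by
    intro M
    have hz : Nm M * Nm' M = 0 := corrMat_mul_corrMat hn0 _ _
    have hadd : Nm M + Nm' M = 0 := corrMat_add_neg hn0 (γ M)
    calc (1 + Nm M) * (1 + Nm' M) = 1 + (Nm M + Nm' M) + Nm M * Nm' M := by noncomm_ring
      _ = 1 := by rw [hz, hadd, add_zero, add_zero]
  have hprod' : ∀ M : Matrix (Fin n) (Fin n) ℂ, (1 + Nm' M) * (1 + Nm M) = 1 := by
    intro M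
    have hz : Nm' M * Nm M = 0 := corrMat_mul_corrMat hn0 _ _
    have hadd : Nm M + Nm' M = 0 := corrMat_add_neg hn0 (γ M)
    calc (1 + Nm' M) * (1 + Nm M) = 1 + (Nm M + Nm' M) + Nm' M * Nm M := by noncomm_ring
      _ = 1 := by rw [hz, hadd, add_zero, add_zero]
  have hinv1 : Function.LeftInverse ψf φf := by
    intro Xm
    apply Subtype.ext
    show ((Xm : Matrix (Fin n) (Fin n) ℂ) * (1 + Nm (Xm : Matrix (Fin n) (Fin n) ℂ)))
        * (1 + Nm' ((φf Xm : Matrix (Fin n) (Fin n) ℂ))) = (Xm : Matrix (Fin n) (Fin n) ℂ)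
    have : Nm' ((φf Xm : Matrix (Fin n) (Fin n) ℂ)) = Nm' (Xm : Matrix (Fin n) (Fin n) ℂ) := by
      rw [hNm'def]
      simp only [hγφ Xm]
    rw [this, mul_assoc, hprod, mul_one]
  have hinv2 : Function.RightInverse ψf φf := by
    intro Xm
    apply Subtype.ext
    show ((Xm : Matrix (Fin n) (Fin n) ℂ) * (1 + Nm' (Xm : Matrix (Fin n) (Fin n) ℂ)))
        * (1 + Nm ((ψf Xm : Matrix (Fin n) (Fin n) ℂ))) = (Xm : Matrix (Fin n) (Fin n) ℂ)
    have : Nm ((ψf Xm : Matrix (Fin n) (Fin n) ℂ)) = Nm (Xm : Matrix (Fin n) (Fin n) ℂ) := by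
      rw [hNmdef]
      simp only [hγψ Xm]
    rw [this, mul_assoc, hprod', mul_one]
  -- regularity
  have hγeval : ∀ (Xm : SL n) (k : Fin (n - 1)),
      MvPolynomial.eval (fun kl : Fin n × Fin n => (Xm : Matrix (Fin n) (Fin n) ℂ) kl.1 kl.2)
        (MvPolynomial.rename (embCol n) (G k)) = γ (Xm : Matrix (Fin n) (Fin n) ℂ) k := by
    intro Xm k
    rw [MvPolynomial.eval_rename]
    rfl
  have hregφ : SLRegular φf := by
    intro i j
    by_cases hj : j = ⟨0, hn0⟩
    · subst hj
      refine ⟨MvPolynomial.X (i, ⟨0, hn0⟩) + ∑ k : Fin (n - 1),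
        MvPolynomial.X (i, (⟨(k : ℕ) + 1, by have := k.isLt; omega⟩ : Fin n)) *
          MvPolynomial.rename (embCol n) (G k), ?_⟩
      intro Xm
      have hent := mul_one_add_corrMat_zero hn0 (i := i)
        (Xm : Matrix (Fin n) (Fin n) ℂ) (γ (Xm : Matrix (Fin n) (Fin n) ℂ))
      rw [_root_.map_add, MvPolynomial.eval_X, _root_.map_sum]
      show ((Xm : Matrix (Fin n) (Fin n) ℂ) *
        (1 + corrMat n hn0 (γ (Xm : Matrix (Fin n) (Fin n) ℂ)))) i ⟨0, hn0⟩ = _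
      rw [hent]
      congr 1
      refine Finset.sum_congr rfl fun k _ => ?_
      rw [_root_.map_mul, MvPolynomial.eval_X, hγeval Xm k]
    · refine ⟨MvPolynomial.X (i, j), ?_⟩
      intro Xm
      rw [hφcol Xm i j hj, MvPolynomial.eval_X]
  have hregψ : SLRegular ψf := by
    intro i j
    by_cases hj : j = ⟨0, hn0⟩
    · subst hj
      refine ⟨MvPolynomial.X (i, ⟨0, hn0⟩) + ∑ k : Fin (n - 1),
        MvPolynomial.X (i, (⟨(k : ℕ) + 1, by have := k.isLt; omega⟩ : Fin n)) *
          (- MvPolynomial.rename (embCol n) (G k)), ?_⟩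
      intro Xm
      have hent := mul_one_add_corrMat_zero hn0 (i := i)
        (Xm : Matrix (Fin n) (Fin n) ℂ) (fun k => - γ (Xm : Matrix (Fin n) (Fin n) ℂ) k)
      rw [_root_.map_add, MvPolynomial.eval_X, _root_.map_sum]
      show ((Xm : Matrix (Fin n) (Fin n) ℂ) *
        (1 + corrMat n hn0 (fun k => - γ (Xm : Matrix (Fin n) (Fin n) ℂ) k))) i ⟨0, hn0⟩ = _
      rw [hent]
      congr 1
      refine Finset.sum_congr rfl fun k _ => ?_
      rw [_root_.map_mul, MvPolynomial.eval_X, _root_.map_neg, hγeval Xm k]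
    · refine ⟨MvPolynomial.X (i, j), ?_⟩
      intro Xm
      rw [hψcol Xm i j hj, MvPolynomial.eval_X]
  refine ⟨φf, ⟨hregφ, ψf, hregψ, hinv1, hinv2⟩, ?_⟩
  intro t
  have hent := mul_one_add_corrMat_zero hn0 (i := (⟨n - 1, by omega⟩ : Fin n))
    ((f t : Matrix (Fin n) (Fin n) ℂ)) (γ ((f t : Matrix (Fin n) (Fin n) ℂ)))
  show ((f t : Matrix (Fin n) (Fin n) ℂ) *
    (1 + corrMat n hn0 (γ ((f t : Matrix (Fin n) (Fin n) ℂ))))) ⟨n - 1, by omega⟩ ⟨0, by omega⟩ = t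
  rw [hent]
  have hsum : ∑ k : Fin (n - 1), (f t : Matrix (Fin n) (Fin n) ℂ) ⟨n - 1, by omega⟩
      ⟨(k : ℕ) + 1, by have := k.isLt; omega⟩ * γ ((f t : Matrix (Fin n) (Fin n) ℂ)) k
      = t - (f t : Matrix (Fin n) (Fin n) ℂ) ⟨n - 1, by omega⟩ ⟨0, by omega⟩ := by
    rw [← bezout t]
    exact Finset.sum_congr rfl fun k _ => by rw [hγf t k]
  rw [hsum]
  ring
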